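/- Let X be an F-space and let A be a subset of the space of continuous linear operators on X which is a countable union of compact sets (in the operator-norm / strong topology on L(X)). Then the set of common hypercyclic vectors ⋂_{T∈A} HC(T) is a Gδ subset of X. -/

import Mathlib

open Filter Topology Set Pointwise Uniformity

/-- The set of hypercyclic vectors of a continuous linear operator `T`:
those `x` whose orbit `{Tⁿ x : n ≥ 1}` is dense. -/
def hypercyclicVectors {X : Type*} [AddCommGroup X] [Module ℝ X] [TopologicalSpace X]
    (T : X →L[ℝ] X) : Set X :=
  {x : X | Dense (Set.range fun n : ℕ => (T ^ (n + 1)) x)}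

section Aux

variable {X : Type*} [AddCommGroup X] [Module ℝ X] [UniformSpace X]
    [IsUniformAddGroup X] [ContinuousSMul ℝ X]



variable {X : Type*} [AddCommGroup X] [Module ℝ X] [UniformSpace X]
    [IsUniformAddGroup X] [ContinuousSMul ℝ X]

/-- Banach–Steinhaus / equicontinuity for a compact (hence pointwise bounded) family of
continuous linear operators on a Baire TVS. -/
lemma equicont_of_compact [BaireSpace X] {K : Set (X →L[ℝ] X)} (hK : IsCompact K) :
    ∀ U ∈ 𝓝 (0 : X), ∃ V ∈ 𝓝 (0 : X), ∀ T ∈ K, ∀ x ∈ V, T x ∈ U := by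
  intro U hU
  obtain ⟨W, hW, hWU⟩ := exists_nhds_zero_half hU
  -- W₂ symmetric-ish
  have hnegW : (fun x : X => -x) ⁻¹' W ∈ 𝓝 (0 : X) := by
    have : Tendsto (fun x : X => -x) (𝓝 0) (𝓝 0) := by
      simpa using (continuous_neg.tendsto (0 : X))
    exact this hW
  have hW₂ : W ∩ (fun x : X => -x) ⁻¹' W ∈ 𝓝 (0 : X) := inter_mem hW hnegW
  obtain ⟨C, ⟨hCmem, hCclosed⟩, hCsub⟩ := (closed_nhds_basis (0 : X)).mem_iff.mp hW₂
  -- the closed set E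
  set E : Set X := ⋂ T ∈ K, T ⁻¹' C with hE
  have hEclosed : IsClosed E :=
    isClosed_biInter fun T _ => hCclosed.preimage T.continuous
  have hmemE : ∀ {y : X}, y ∈ E → ∀ T ∈ K, T y ∈ C := by
    intro y hy T hT
    exact mem_iInter₂.mp hy T hT
  -- covering
  have hcover : ∀ x : X, ∃ n : ℕ, x ∈ ((n : ℝ) + 1) • E := by
    intro x
    have hbdd : Bornology.IsVonNBounded ℝ ((fun T : X →L[ℝ] X => T x) '' K) :=
      ((hK.image (ContinuousEvalConst.continuous_eval_const x)).totallyBounded).isVonNBounded ℝ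
    have habs := hbdd hCmem
    obtain ⟨r, -, hr⟩ := Filter.hasBasis_cobounded_norm.eventually_iff.mp habs
    obtain ⟨n, hn⟩ := exists_nat_ge r
    have hnr : r ≤ ‖((n : ℝ) + 1)‖ := by
      rw [Real.norm_eq_abs, abs_of_nonneg (by positivity)]
      linarith
    have hsub := hr hnr
    have hne : ((n : ℝ) + 1) ≠ 0 := by positivity
    refine ⟨n, ?_⟩
    rw [mem_smul_set_iff_inv_smul_mem₀ hne]
    refine mem_iInter₂.mpr fun T hT => ?_
    have : T x ∈ ((n : ℝ) + 1) • C := hsub ⟨T, hT, rfl⟩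
    rw [mem_smul_set_iff_inv_smul_mem₀ hne] at this
    simpa using this
  -- Baire
  have hclosed' : ∀ n : ℕ, IsClosed (((n : ℝ) + 1) • E) := fun n => by
    have hne : ((n : ℝ) + 1) ≠ 0 := by positivity
    have := (Homeomorph.smulOfNeZero _ hne).isClosedMap _ hEclosed
    simpa [Set.image_smul] using this
  have hunion : (⋃ n : ℕ, ((n : ℝ) + 1) • E) = univ :=
    eq_univ_of_forall fun x => mem_iUnion.mpr (hcover x)
  obtain ⟨n, hn⟩ := nonempty_interior_of_iUnion_of_closed hclosed' hunion
  have hintE : (interior E).Nonempty := by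
    rw [interior_smul₀ (G₀ := ℝ) (by positivity : ((n : ℝ) + 1) ≠ 0) E] at hn
    obtain ⟨y, z, hz, rfl⟩ := hn
    exact ⟨z, hz⟩
  obtain ⟨x₀, hx₀⟩ := hintE
  refine ⟨(fun y => x₀ + y) ⁻¹' interior E, ?_, ?_⟩
  · refine (isOpen_interior.preimage (continuous_add_left x₀)).mem_nhds ?_
    simpa using hx₀
  · intro T hT x hx
    have h1 : T (x₀ + x) ∈ C := hmemE (interior_subset hx) T hT
    have h2 : T x₀ ∈ C := hmemE (interior_subset hx₀) T hT
    have : T x = T (x₀ + x) + -(T x₀) := by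
      rw [map_add]; abel
    rw [this]
    exact hWU _ (hCsub h1).1 _ (hCsub h2).2




lemma eval_continuousOn {K : Set (X →L[ℝ] X)}
    (hEqui : ∀ U ∈ 𝓝 (0 : X), ∃ V ∈ 𝓝 (0 : X), ∀ T ∈ K, ∀ x ∈ V, T x ∈ U) :
    ContinuousOn (fun p : (X →L[ℝ] X) × X => p.1 p.2) (K ×ˢ (univ : Set X)) := by
  rintro ⟨T₀, x₀⟩ hp₀
  have h1 : Tendsto (fun p : (X →L[ℝ] X) × X => p.1 (p.2 - x₀))
      (𝓝[K ×ˢ (univ : Set X)] (T₀, x₀)) (𝓝 0) := by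
    intro U hU
    obtain ⟨V, hV, hVK⟩ := hEqui U hU
    have h2 : Tendsto (fun p : (X →L[ℝ] X) × X => p.2 - x₀)
        (𝓝[K ×ˢ (univ : Set X)] (T₀, x₀)) (𝓝 0) := by
      have : Tendsto (fun p : (X →L[ℝ] X) × X => p.2 - x₀) (𝓝 (T₀, x₀)) (𝓝 0) := by
        have hcont : Continuous fun p : (X →L[ℝ] X) × X => p.2 - x₀ :=
          continuous_snd.sub continuous_const
        simpa using hcont.tendsto (T₀, x₀)
      exact this.mono_left nhdsWithin_le_nhds
    have hmemV := h2.eventually_mem hV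
    have hmemK : ∀ᶠ p : (X →L[ℝ] X) × X in 𝓝[K ×ˢ (univ : Set X)] (T₀, x₀), p.1 ∈ K := by
      filter_upwards [self_mem_nhdsWithin] with p hp
      exact hp.1
    rw [Filter.mem_map]
    filter_upwards [hmemV, hmemK] with p h1 h2
    exact hVK p.1 h2 _ h1
  have h3 : Tendsto (fun p : (X →L[ℝ] X) × X => p.1 x₀)
      (𝓝[K ×ˢ (univ : Set X)] (T₀, x₀)) (𝓝 (T₀ x₀)) := by
    have : Continuous fun p : (X →L[ℝ] X) × X => p.1 x₀ :=
      (ContinuousEvalConst.continuous_eval_const x₀).comp continuous_fst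
    exact (this.tendsto _).mono_left nhdsWithin_le_nhds
  have := h1.add h3
  rw [zero_add] at this
  refine this.congr fun p => ?_
  rw [← map_add]
  congr 1
  abel

lemma pow_eval_continuousOn {K : Set (X →L[ℝ] X)}
    (hEqui : ∀ U ∈ 𝓝 (0 : X), ∃ V ∈ 𝓝 (0 : X), ∀ T ∈ K, ∀ x ∈ V, T x ∈ U) (n : ℕ) :
    ContinuousOn (fun p : (X →L[ℝ] X) × X => (p.1 ^ n) p.2) (K ×ˢ (univ : Set X)) := by
  induction n with
  | zero => simpa using continuous_snd.continuousOn
  | succ n ih =>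
    have heq : ∀ p : (X →L[ℝ] X) × X, (p.1 ^ (n + 1)) p.2 = p.1 ((p.1 ^ n) p.2) := by
      intro p
      rw [pow_succ']
      rfl
    have hmap : MapsTo (fun p : (X →L[ℝ] X) × X => (p.1, (p.1 ^ n) p.2))
        (K ×ˢ (univ : Set X)) (K ×ˢ (univ : Set X)) := fun p hp => ⟨hp.1, trivial⟩
    have : ContinuousOn (fun p : (X →L[ℝ] X) × X => p.1 ((p.1 ^ n) p.2))
        (K ×ˢ (univ : Set X)) :=
      (eval_continuousOn hEqui).comp (continuous_fst.continuousOn.prodMk ih) hmap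
    exact this.congr fun p _ => heq p

lemma isOpen_common {K : Set (X →L[ℝ] X)} (hK : IsCompact K)
    (hEqui : ∀ U ∈ 𝓝 (0 : X), ∃ V ∈ 𝓝 (0 : X), ∀ T ∈ K, ∀ x ∈ V, T x ∈ U)
    {U : Set X} (hU : IsOpen U) :
    IsOpen {x : X | ∀ T ∈ K, ∃ n : ℕ, (T ^ (n + 1)) x ∈ U} := by
  rw [isOpen_iff_mem_nhds]
  intro x₀ hx₀
  -- for each T ∈ K choose n and a product neighborhood
  have key : ∀ T ∈ K, ∃ n : ℕ, ∃ A ∈ 𝓝 T, ∃ B ∈ 𝓝 x₀,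
      ∀ S ∈ K, S ∈ A → ∀ y ∈ B, (S ^ (n + 1)) y ∈ U := by
    intro T hT
    obtain ⟨n, hn⟩ := hx₀ T hT
    have hc := pow_eval_continuousOn hEqui (n + 1) (T, x₀) ⟨hT, trivial⟩
    have := hc (hU.mem_nhds hn)
    rw [Filter.mem_map, mem_nhdsWithin] at this
    obtain ⟨O, hOopen, hO, hOsub⟩ := this
    obtain ⟨A, hA, B, hB, hABO⟩ := mem_nhds_prod_iff.mp (hOopen.mem_nhds hO)
    refine ⟨n, A, hA, B, hB, fun S hSK hSA y hy => ?_⟩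
    have hmem : (S, y) ∈ O ∩ K ×ˢ (univ : Set X) := ⟨hABO ⟨hSA, hy⟩, hSK, trivial⟩
    exact hOsub hmem
  choose! n A hA B hB hgood using key
  -- compactness: cover K by interiors of A T
  obtain ⟨s, hsK, hscov⟩ := hK.elim_nhds_subcover A hA
  have hBmem : (⋂ T ∈ s, B T) ∈ 𝓝 x₀ :=
    (Filter.biInter_finset_mem s).mpr fun T hT => hB T (hsK T hT)
  refine Filter.mem_of_superset hBmem fun y hy S hS => ?_
  obtain ⟨T, hTs, hSA⟩ := Set.mem_iUnion₂.mp (hscov hS)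
  exact ⟨n T, hgood T (hsK T hTs) S hS hSA y (mem_iInter₂.mp hy T hTs)⟩

end Aux

/-- If `X` is an F-space (complete metrizable topological vector space)
and `A` is a subset of `L(X)` which is a countable union of compact sets (for the strong
topology on `L(X)`), then the set of common hypercyclic vectors `⋂_{T ∈ A} HC(T)` is a
Gδ subset of `X`. -/
theorem gdelta_common_hypercyclic
    {X : Type*} [AddCommGroup X] [Module ℝ X] [UniformSpace X]
    [IsUniformAddGroup X] [ContinuousSMul ℝ X] [CompleteSpace X]
    [TopologicalSpace.MetrizableSpace X]
    (A : Set (X →L[ℝ] X))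
    (hA : ∃ K : ℕ → Set (X →L[ℝ] X), (∀ p, IsCompact (K p)) ∧ A = ⋃ p, K p) :
    IsGδ (⋂ T ∈ A, hypercyclicVectors T) := by
  haveI hcg : (uniformity X).IsCountablyGenerated := by
    rw [uniformity_eq_comap_nhds_zero X]; infer_instance
  haveI hBaire : BaireSpace X := by
    letI := UniformSpace.pseudoMetricSpace X
    infer_instance
  obtain ⟨K, hKc, rfl⟩ := hA
  rcases Set.eq_empty_or_nonempty (⋂ T ∈ ⋃ p, K p, hypercyclicVectors T) with hemp | hne
  · rw [hemp]; exact IsGδ.empty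
  rcases Set.eq_empty_or_nonempty (⋃ p, K p) with hAemp | ⟨T₀, hT₀⟩
  · rw [hAemp]; simpa using IsGδ.univ
  obtain ⟨x₀, hx₀⟩ := hne
  have hx₀' : x₀ ∈ hypercyclicVectors T₀ := mem_iInter₂.mp hx₀ T₀ hT₀
  haveI : TopologicalSpace.SeparableSpace X :=
    ⟨⟨_, countable_range _, hx₀'⟩⟩
  haveI : SecondCountableTopology X := UniformSpace.secondCountable_of_separable X
  obtain ⟨B, hBc, hBne, hBbasis⟩ := TopologicalSpace.exists_countable_basis X
  have key : (⋂ T ∈ ⋃ p, K p, hypercyclicVectors T)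
      = ⋂ p : ℕ, ⋂ U ∈ B, {x : X | ∀ T ∈ K p, ∃ n : ℕ, (T ^ (n + 1)) x ∈ U} := by
    ext x
    simp only [mem_iInter, mem_iUnion, mem_setOf_eq]
    constructor
    · intro h p U hU T hT
      have hd : Dense (Set.range fun n : ℕ => (T ^ (n + 1)) x) := h T ⟨p, hT⟩
      have hUne : U.Nonempty := by
        rcases Set.eq_empty_or_nonempty U with rfl | h'
        · exact absurd hU hBne
        · exact h'
      obtain ⟨y, hyU, m, hym⟩ := hBbasis.dense_iff.mp hd U hU hUne
      exact ⟨m, by simp only at hym; rwa [hym]⟩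
    · rintro h T ⟨p, hT⟩
      show Dense (Set.range fun n : ℕ => (T ^ (n + 1)) x)
      rw [hBbasis.dense_iff]
      rintro U hU -
      obtain ⟨m, hm⟩ := h p U hU T hT
      exact ⟨_, hm, m, rfl⟩
  rw [key]
  refine IsGδ.iInter fun p => IsGδ.biInter hBc fun U hU => ?_
  exact (isOpen_common (hKc p) (equicont_of_compact (hKc p)) (hBbasis.isOpen hU)).isGδ
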